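/- Let μ : {1,2,3,…} → {0,1} be a 0-1 word. Then the graph G_μ is a comparability graph and its complement is also a comparability graph; that is, there exist partial orders ≤₁ and ≤₂ on the vertex set ℕ such that two distinct vertices are adjacent in G_μ if and only if they are comparable in ≤₁, and two distinct vertices are non-adjacent in G_μ if and only if they are comparable in ≤₂. In particular, every finite induced subgraph of G_μ is a permutation graph. -/

import Mathlib

/-- Adjacency rule of the graph associated with a 0-1 word `μ` (letters indexed from 1):
for `i < j`, `{i,j}` is an edge iff (`μ j = 1` and `j = i+1`) or (`μ j = 0` and `j ≠ i+1`). -/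
def GmuAdj (μ : ℕ → Bool) (i j : ℕ) : Prop :=
  (i < j ∧ ((μ j = true ∧ j = i + 1) ∨ (μ j = false ∧ j ≠ i + 1))) ∨
  (j < i ∧ ((μ i = true ∧ i = j + 1) ∨ (μ i = false ∧ i ≠ j + 1)))

/-- The graph `G_μ` on `ℕ` associated with the 0-1 word `μ : {1,2,…} → {0,1}`. -/
def Gmu (μ : ℕ → Bool) : SimpleGraph ℕ where
  Adj i j := GmuAdj μ i j
  symm := ⟨fun i j h => Or.symm h⟩
  loopless := ⟨fun i h => by
    rcases h with ⟨h1, _⟩ | ⟨h1, _⟩ <;> exact lt_irrefl i h1⟩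

/-- Adjacency rule for the graph of a finite 0-1 word `w = w₁…wₙ` on vertices `{0,…,n}`. -/
def GWAdj (w : List Bool) (i j : ℕ) : Prop :=
  (i < j ∧ ((w.getD (j - 1) false = true ∧ j = i + 1) ∨
            (w.getD (j - 1) false = false ∧ j ≠ i + 1))) ∨
  (j < i ∧ ((w.getD (i - 1) false = true ∧ i = j + 1) ∨
            (w.getD (i - 1) false = false ∧ i ≠ j + 1)))

/-- The graph `G_w` of a finite 0-1 word `w = w₁…wₙ`, on the vertex set `{0,1,…,n}`. -/
def GW (w : List Bool) : SimpleGraph (Fin (w.length + 1)) where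
  Adj i j := GWAdj w i j
  symm := ⟨fun i j h => Or.symm h⟩
  loopless := ⟨fun i h => by
    rcases h with ⟨h1, _⟩ | ⟨h1, _⟩ <;> exact lt_irrefl (i : ℕ) h1⟩

/-- `M` is a module of the graph `G`: every vertex outside `M` is adjacent either to all
vertices of `M` or to none of them. -/
def IsModule {V : Type*} (G : SimpleGraph V) (M : Set V) : Prop :=
  ∀ x ∉ M, (∀ a ∈ M, G.Adj x a) ∨ (∀ a ∈ M, ¬ G.Adj x a)

/-- A graph is prime if its only modules are the empty set, singletons and the whole
vertex set. -/
def GraphPrime {V : Type*} (G : SimpleGraph V) : Prop :=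
  ∀ M : Set V, IsModule G M → M = ∅ ∨ (∃ a, M = {a}) ∨ M = Set.univ

/-- `G` is a comparability graph: there is a partial order on the vertices whose pairs of
distinct comparable elements are exactly the edges of `G`. -/
def IsComparabilityGraph {V : Type*} (G : SimpleGraph V) : Prop :=
  ∃ r : V → V → Prop, IsPartialOrder V r ∧
    ∀ a b : V, a ≠ b → (G.Adj a b ↔ (r a b ∨ r b a))


def sgn (b : Bool) : ℤ := cond b 1 (-1)

def st (μ : ℕ → Bool) : ℕ → Bool × Bool
  | 0 => (true, true)
  | j+1 =>
    let p := st μ j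
    if (j+1) % 2 = 1 then (cond (μ (j+1)) p.2 (!p.2), p.2)
    else (p.1, cond (μ (j+1)) p.1 (!p.1))

def XX (μ : ℕ → Bool) (j : ℕ) : ℤ :=
  if j = 0 then 0
  else if j % 2 = 1 then sgn (st μ j).1 * (2 * (j:ℤ))
  else sgn (st μ j).1 * (2 * (j:ℤ) - 3)

def YY (μ : ℕ → Bool) (j : ℕ) : ℤ :=
  if j = 0 then 0
  else if j % 2 = 1 then sgn (st μ j).2 * (2 * (j:ℤ) - 3)
  else sgn (st μ j).2 * (2 * (j:ℤ))

lemma absX (μ : ℕ → Bool) (i : ℕ) : -(2*(i:ℤ)) ≤ XX μ i ∧ XX μ i ≤ 2*(i:ℤ) := by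
  unfold XX
  by_cases h0 : i = 0
  · subst h0; simp
  · have h1 : 1 ≤ (i:ℤ) := by exact_mod_cast Nat.one_le_iff_ne_zero.mpr h0
    rw [if_neg h0]
    rcases Nat.mod_two_eq_zero_or_one i with h | h
    · have h' : ¬ (i % 2 = 1) := by omega
      rw [if_neg h']; cases (st μ i).1 <;> simp [sgn] <;> omega
    · rw [if_pos h]; cases (st μ i).1 <;> simp [sgn] <;> omega

lemma absY (μ : ℕ → Bool) (i : ℕ) : -(2*(i:ℤ)) ≤ YY μ i ∧ YY μ i ≤ 2*(i:ℤ) := by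
  unfold YY
  by_cases h0 : i = 0
  · subst h0; simp
  · have h1 : 1 ≤ (i:ℤ) := by exact_mod_cast Nat.one_le_iff_ne_zero.mpr h0
    rw [if_neg h0]
    rcases Nat.mod_two_eq_zero_or_one i with h | h
    · have h' : ¬ (i % 2 = 1) := by omega
      rw [if_neg h']; cases (st μ i).2 <;> simp [sgn] <;> omega
    · rw [if_pos h]; cases (st μ i).2 <;> simp [sgn] <;> omega

lemma st_fst_even (μ : ℕ → Bool) {j : ℕ} (h2 : j % 2 = 0) (h0 : j ≠ 0) :
    (st μ j).1 = (st μ (j-1)).1 := by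
  obtain ⟨k, rfl⟩ : ∃ k, j = k + 1 := ⟨j - 1, by omega⟩
  have h : ¬ ((k+1) % 2 = 1) := by omega
  simp [st, h]

lemma st_snd_odd (μ : ℕ → Bool) {j : ℕ} (h2 : j % 2 = 1) :
    (st μ j).2 = (st μ (j-1)).2 := by
  have h0 : j ≠ 0 := by omega
  obtain ⟨k, rfl⟩ : ∃ k, j = k + 1 := ⟨j - 1, by omega⟩
  simp [st, h2]

lemma st_eq (μ : ℕ → Bool) {j : ℕ} (h0 : j ≠ 0) :
    ((st μ j).1 = (st μ j).2) ↔ μ j = true := by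
  obtain ⟨k, rfl⟩ : ∃ k, j = k + 1 := ⟨j - 1, by omega⟩
  rcases Nat.mod_two_eq_zero_or_one (k+1) with h | h
  · have h' : ¬ ((k+1) % 2 = 1) := by omega
    simp only [st, if_neg h']
    cases hm : μ (k+1) <;> cases (st μ k).1 <;> simp
  · simp only [st, if_pos h]
    cases hm : μ (k+1) <;> cases (st μ k).2 <;> simp
lemma key (μ : ℕ → Bool) {i j : ℕ} (hij : i < j) :
    (XX μ i < XX μ j ∨ XX μ j < XX μ i) ∧ (YY μ i < YY μ j ∨ YY μ j < YY μ i) ∧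
    (GmuAdj μ i j ↔
      ((XX μ i < XX μ j ∧ YY μ j < YY μ i) ∨ (XX μ j < XX μ i ∧ YY μ i < YY μ j))) := by
  have hj0 : j ≠ 0 := by omega
  have hAdj : GmuAdj μ i j ↔ ((μ j = true ∧ j = i+1) ∨ (μ j = false ∧ j ≠ i+1)) := by
    constructor
    · rintro (⟨_, h⟩ | ⟨h, _⟩)
      · exact h
      · exact absurd (hij.trans h) (lt_irrefl _)
    · intro h; exact Or.inl ⟨hij, h⟩
  have hXi := absX μ i
  have hYi := absY μ i
  have hij' : (i:ℤ) < (j:ℤ) := by exact_mod_cast hij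
  have hmu := st_eq μ hj0
  rcases Nat.mod_two_eq_zero_or_one j with hp | hp
  · -- j even (so j ≥ 2)
    have hp' : ¬ (j % 2 = 1) := by omega
    have hXj : XX μ j = sgn (st μ j).1 * (2*(j:ℤ) - 3) := by
      rw [XX, if_neg hj0, if_neg hp']
    have hYj : YY μ j = sgn (st μ j).2 * (2*(j:ℤ)) := by
      rw [YY, if_neg hj0, if_neg hp']
    by_cases hnear : i + 1 = j
    · -- i = j - 1, odd, i ≥ 1
      have hi0 : i ≠ 0 := by omega
      have hipodd : i % 2 = 1 := by omega
      have hs := st_fst_even μ hp hj0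
      rw [show j - 1 = i by omega] at hs
      have hXi' : XX μ i = sgn (st μ j).1 * (2*(j:ℤ) - 2) := by
        rw [XX, if_neg hi0, if_pos hipodd, ← hs]
        have : 2*(i:ℤ) = 2*(j:ℤ) - 2 := by omega
        rw [this]
      rw [hAdj]
      cases ha : (st μ j).1 <;> cases hb : (st μ j).2 <;> cases hm : μ j <;>
        simp_all [sgn] <;> omega
    · -- far : i + 1 < j, i ≤ j - 2
      have hfar : (i:ℤ) ≤ (j:ℤ) - 2 := by omega
      rw [hAdj]
      cases ha : (st μ j).1 <;> cases hb : (st μ j).2 <;> cases hm : μ j <;>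
        simp_all [sgn] <;> omega
  · -- j odd
    have hXj : XX μ j = sgn (st μ j).1 * (2*(j:ℤ)) := by
      rw [XX, if_neg hj0, if_pos hp]
    have hYj : YY μ j = sgn (st μ j).2 * (2*(j:ℤ) - 3) := by
      rw [YY, if_neg hj0, if_pos hp]
    by_cases hnear : i + 1 = j
    · -- i = j - 1, even (possibly 0)
      have hs := st_snd_odd μ hp
      rw [show j - 1 = i by omega] at hs
      have hYi' : YY μ i = sgn (st μ j).2 * (2*(j:ℤ) - 2) := by
        by_cases hi0 : i = 0
        · have hj1 : (j:ℤ) = 1 := by omega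
          rw [YY, if_pos hi0, hj1]
          norm_num
        · have hipev : ¬ (i % 2 = 1) := by omega
          rw [YY, if_neg hi0, if_neg hipev, ← hs]
          have : 2*(i:ℤ) = 2*(j:ℤ) - 2 := by omega
          rw [this]
      rw [hAdj]
      cases ha : (st μ j).1 <;> cases hb : (st μ j).2 <;> cases hm : μ j <;>
        simp_all [sgn] <;> omega
    · have hfar : (i:ℤ) ≤ (j:ℤ) - 2 := by omega
      rw [hAdj]
      cases ha : (st μ j).1 <;> cases hb : (st μ j).2 <;> cases hm : μ j <;>
        simp_all [sgn] <;> omega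

lemma genPO {V : Type*} (f g : V → ℤ) :
    IsPartialOrder V (fun a b => a = b ∨ (f a < f b ∧ g b < g a)) := by
  refine { refl := fun a => Or.inl rfl, trans := ?_, antisymm := ?_ }
  · rintro a b c (rfl | ⟨h1, h2⟩) (rfl | ⟨h3, h4⟩)
    · exact Or.inl rfl
    · exact Or.inr ⟨h3, h4⟩
    · exact Or.inr ⟨h1, h2⟩
    · exact Or.inr ⟨h1.trans h3, h4.trans h2⟩
  · intro a b h1 h2
    rcases h1 with rfl | ⟨h1a, h1b⟩
    · rfl
    · rcases h2 with rfl | ⟨h2a, h2b⟩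
      · rfl
      · exact absurd (h1a.trans h2a) (lt_irrefl _)

lemma adj_iff (μ : ℕ → Bool) {a b : ℕ} (h : a ≠ b) :
    (Gmu μ).Adj a b ↔
      ((XX μ a < XX μ b ∧ YY μ b < YY μ a) ∨ (XX μ b < XX μ a ∧ YY μ a < YY μ b)) := by
  rcases lt_or_gt_of_ne h with hl | hl
  · exact (key μ hl).2.2
  · have h2 := (key μ hl).2.2
    constructor
    · intro hadj
      rcases h2.mp hadj.symm with h3 | h3
      · exact Or.inr h3
      · exact Or.inl h3
    · intro hd
      have : GmuAdj μ b a := h2.mpr (by tauto)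
      exact (SimpleGraph.Adj.symm (G := Gmu μ) this : (Gmu μ).Adj a b)

lemma nadj_iff (μ : ℕ → Bool) {a b : ℕ} (h : a ≠ b) :
    ¬ (Gmu μ).Adj a b ↔
      ((XX μ a < XX μ b ∧ YY μ a < YY μ b) ∨ (XX μ b < XX μ a ∧ YY μ b < YY μ a)) := by
  rw [adj_iff μ h]
  rcases lt_or_gt_of_ne h with hl | hl
  · obtain ⟨hx, hy, -⟩ := key μ hl
    have nx : ¬ (XX μ a < XX μ b ∧ XX μ b < XX μ a) :=
      fun ⟨u, v⟩ => absurd (u.trans v) (lt_irrefl _)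
    have ny : ¬ (YY μ a < YY μ b ∧ YY μ b < YY μ a) :=
      fun ⟨u, v⟩ => absurd (u.trans v) (lt_irrefl _)
    tauto
  · obtain ⟨hx, hy, -⟩ := key μ hl
    have nx : ¬ (XX μ a < XX μ b ∧ XX μ b < XX μ a) :=
      fun ⟨u, v⟩ => absurd (u.trans v) (lt_irrefl _)
    have ny : ¬ (YY μ a < YY μ b ∧ YY μ b < YY μ a) :=
      fun ⟨u, v⟩ => absurd (u.trans v) (lt_irrefl _)
    tauto

theorem stmt7 (μ : ℕ → Bool) :
    IsComparabilityGraph (Gmu μ) ∧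
    IsComparabilityGraph (Gmu μ)ᶜ ∧
    ∀ S : Finset ℕ,
      IsComparabilityGraph ((Gmu μ).induce (↑S : Set ℕ)) ∧
      IsComparabilityGraph (((Gmu μ).induce (↑S : Set ℕ))ᶜ) := by
  refine ⟨?_, ?_, ?_⟩
  · refine ⟨fun a b => a = b ∨ (XX μ a < XX μ b ∧ YY μ b < YY μ a),
      genPO (XX μ) (YY μ), fun a b h => ?_⟩
    rw [adj_iff μ h]
    have h' : b ≠ a := h.symm
    constructor
    · rintro (h1 | h1)
      · exact Or.inl (Or.inr h1)
      · exact Or.inr (Or.inr h1)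
    · rintro ((rfl | h1) | (rfl | h1))
      · exact absurd rfl h
      · exact Or.inl h1
      · exact absurd rfl h
      · exact Or.inr h1
  · refine ⟨fun a b => a = b ∨ (XX μ a < XX μ b ∧ (-(YY μ b)) < -(YY μ a)),
      genPO (XX μ) (fun v => -(YY μ v)), fun a b h => ?_⟩
    rw [SimpleGraph.compl_adj]
    simp only [neg_lt_neg_iff]
    rw [show (a ≠ b ∧ ¬(Gmu μ).Adj a b ↔ ¬(Gmu μ).Adj a b) from by tauto,
      nadj_iff μ h]
    constructor
    · rintro (h1 | h1)
      · exact Or.inl (Or.inr h1)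
      · exact Or.inr (Or.inr h1)
    · rintro ((rfl | h1) | (rfl | h1))
      · exact absurd rfl h
      · exact Or.inl h1
      · exact absurd rfl h
      · exact Or.inr h1
  · intro S
    constructor
    · refine ⟨fun a b => a = b ∨ (XX μ a.val < XX μ b.val ∧ YY μ b.val < YY μ a.val),
        genPO (fun (v : (↑S : Set ℕ)) => XX μ v.val) (fun (v : (↑S : Set ℕ)) => YY μ v.val), fun a b h => ?_⟩
      have hv : a.val ≠ b.val := fun he => h (Subtype.ext he)
      have : ((Gmu μ).induce (↑S : Set ℕ)).Adj a b ↔ (Gmu μ).Adj a.val b.val := by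
        exact Iff.rfl
      rw [this, adj_iff μ hv]
      constructor
      · rintro (h1 | h1)
        · exact Or.inl (Or.inr h1)
        · exact Or.inr (Or.inr h1)
      · rintro ((rfl | h1) | (rfl | h1))
        · exact absurd rfl h
        · exact Or.inl h1
        · exact absurd rfl h
        · exact Or.inr h1
    · refine ⟨fun a b => a = b ∨ (XX μ a.val < XX μ b.val ∧ (-(YY μ b.val)) < -(YY μ a.val)),
        genPO (fun (v : (↑S : Set ℕ)) => XX μ v.val) (fun (v : (↑S : Set ℕ)) => -(YY μ v.val)), fun a b h => ?_⟩
      have hv : a.val ≠ b.val := fun he => h (Subtype.ext he)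
      rw [SimpleGraph.compl_adj]
      have : ¬((Gmu μ).induce (↑S : Set ℕ)).Adj a b ↔ ¬(Gmu μ).Adj a.val b.val := by
        exact Iff.rfl
      simp only [neg_lt_neg_iff]
      rw [show (a ≠ b ∧ ¬((Gmu μ).induce (↑S : Set ℕ)).Adj a b ↔
          ¬((Gmu μ).induce (↑S : Set ℕ)).Adj a b) from by tauto,
        this, nadj_iff μ hv]
      constructor
      · rintro (h1 | h1)
        · exact Or.inl (Or.inr h1)
        · exact Or.inr (Or.inr h1)
      · rintro ((rfl | h1) | (rfl | h1))
        · exact absurd rfl h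
        · exact Or.inl h1
        · exact absurd rfl h
        · exact Or.inr h1
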